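/- Let r ≥ 1 and let M, S be positive integers with M ≤ S. If (n_i)_{i∈I} is a finite family of nonnegative integers with ∑_i n_i = S and n_i ≤ M for all i, then ∑_i C(n_i, r) ≤ (S/M) · C(M, r), where S/M is real division. -/

import Mathlib

lemma key_nat (M m r : ℕ) (hr : 1 ≤ r) (hm : m ≤ M) :
    M * m.choose r ≤ m * M.choose r := by
  obtain ⟨t, rfl⟩ := Nat.exists_eq_add_of_le hr
  cases m with
  | zero => simp [Nat.choose_eq_zero_of_lt (by omega : (0:ℕ) < 1 + t)]
  | succ a =>
    obtain ⟨b, rfl⟩ := Nat.exists_eq_add_of_le (Nat.one_le_of_lt (Nat.lt_of_lt_of_le (Nat.succ_pos a) hm))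
    have h1 : (a + 1).choose (1 + t) * (t + 1) = (a + 1) * a.choose t := by
      rw [Nat.add_comm 1 t]; exact (Nat.add_one_mul_choose_eq a t).symm
    have h2 : (1 + b).choose (1 + t) * (t + 1) = (b + 1) * b.choose t := by
      rw [Nat.add_comm 1 t, Nat.add_comm 1 b]; exact (Nat.add_one_mul_choose_eq b t).symm
    have hab : a ≤ b := by omega
    have := Nat.choose_le_choose t hab
    have hmul := Nat.mul_le_mul_left ((b + 1) * (a + 1)) this
    refine Nat.le_of_mul_le_mul_right ?_ (Nat.succ_pos t)
    calc (1 + b) * (a + 1).choose (1 + t) * (t + 1)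
        = (1 + b) * ((a + 1).choose (1 + t) * (t + 1)) := by ring
      _ = (b + 1) * (a + 1) * a.choose t := by rw [h1]; ring
      _ ≤ (b + 1) * (a + 1) * b.choose t := hmul
      _ = (a + 1) * ((1 + b).choose (1 + t) * (t + 1)) := by rw [h2]; ring
      _ = (a + 1) * (1 + b).choose (1 + t) * (t + 1) := by ring

theorem sum_choose_bounded {I : Type*} (s : Finset I) (n : I → ℕ) (r M S : ℕ)
    (hr : 1 ≤ r) (hM : 0 < M) (hMS : M ≤ S)
    (hsum : ∑ i ∈ s, n i = S) (hle : ∀ i ∈ s, n i ≤ M) :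
    (∑ i ∈ s, ((n i).choose r : ℝ)) ≤ ((S : ℝ) / M) * M.choose r := by
  have hM' : (0 : ℝ) < M := by exact_mod_cast hM
  have step : ∀ i ∈ s, ((n i).choose r : ℝ) ≤ (n i : ℝ) / M * M.choose r := by
    intro i hi
    have := key_nat M (n i) r hr (hle i hi)
    have hcast : (M : ℝ) * (n i).choose r ≤ (n i : ℝ) * M.choose r := by exact_mod_cast this
    rw [div_mul_eq_mul_div, le_div_iff₀ hM']
    linarith
  calc (∑ i ∈ s, ((n i).choose r : ℝ)) ≤ ∑ i ∈ s, (n i : ℝ) / M * M.choose r :=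
        Finset.sum_le_sum step
    _ = (∑ i ∈ s, (n i : ℝ)) / M * M.choose r := by rw [Finset.sum_div, Finset.sum_mul]
    _ = ((S : ℝ) / M) * M.choose r := by norm_cast; rw [hsum]
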